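/- Let W be a full subcategory of X that is a sieve, and let W → Y be any embedding; form the pushout category Z = X ⊔_W Y in Cat. Then Ob(Z) = Ob(Y) ⊔ (Ob(X) \ Ob(W)), and every morphism of Z is either (1) a morphism of X not in W, or (2) a composite path X₀ → Y₁ → Y₂ → X₂ where the middle map is a morphism of Y and the outer maps are morphisms of X not in W or identities, with Y₁ ∈ W when the first outer map is non-trivial and Y₂ ∈ W when the second is non-trivial. -/

import Mathlib

open CategoryTheory

/-- A morphism lies in the image of a functor `H`. -/
def InImage {C D : Cat} (H : C ⟶ D) {d d' : ↑D} (φ : d ⟶ d') : Prop :=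
  ∃ (c c' : ↑C) (ψ : c ⟶ c') (h : H.toFunctor.obj c = d) (h' : H.toFunctor.obj c' = d'),
    φ = eqToHom h.symm ≫ H.toFunctor.map ψ ≫ eqToHom h'

namespace Stmt11Aux
universe v u
variable {W X Y Z : Cat.{v, u}} (F : W ⟶ X) (G : W ⟶ Y) (iX : X ⟶ Z) (iY : Y ⟶ Z)

def KObj (_F : W ⟶ X) (_G : W ⟶ Y) (_iX : X ⟶ Z) (_iY : Y ⟶ Z) : Type u :=
  ↑Y ⊕ {x : ↑X // x ∉ Set.range _F.toFunctor.obj}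

def KOb : KObj F G iX iY → ↑Z := Sum.elim iY.toFunctor.obj (fun x => iX.toFunctor.obj x.1)

@[simp] lemma KOb_inl (y : ↑Y) : KOb F G iX iY (Sum.inl y) = iY.toFunctor.obj y := rfl
@[simp] lemma KOb_inr (x) : KOb F G iX iY (Sum.inr x) = iX.toFunctor.obj x.1 := rfl

def Q : ∀ (a b : KObj F G iX iY), (KOb F G iX iY a ⟶ KOb F G iX iY b) → Prop
  | .inl y, .inl y' => fun g => ∃ e : y ⟶ y', g = iY.toFunctor.map e
  | .inl y, .inr x => fun g => ∃ (w : ↑W) (d : y ⟶ G.toFunctor.obj w) (f : F.toFunctor.obj w ⟶ x.1)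
      (h : iY.toFunctor.obj (G.toFunctor.obj w) = iX.toFunctor.obj (F.toFunctor.obj w)), g = iY.toFunctor.map d ≫ eqToHom h ≫ iX.toFunctor.map f
  | .inr _, .inl _ => fun _ => False
  | .inr x, .inr x' => fun g => ∃ ψ : x.1 ⟶ x'.1, g = iX.toFunctor.map ψ

lemma Q_id : ∀ a, Q F G iX iY a a (𝟙 _)
  | .inl y => ⟨𝟙 y, (iY.toFunctor.map_id y).symm⟩
  | .inr x => ⟨𝟙 x.1, (iX.toFunctor.map_id x.1).symm⟩

lemma Q_comp : ∀ a b c (f : KOb F G iX iY a ⟶ KOb F G iX iY b)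
    (g : KOb F G iX iY b ⟶ KOb F G iX iY c),
    Q F G iX iY a b f → Q F G iX iY b c g → Q F G iX iY a c (f ≫ g)
  | .inl _, .inl _, .inl _, _, _, ⟨e, he⟩, ⟨e', he'⟩ =>
      ⟨e ≫ e', by subst he he'; simp⟩
  | .inl _, .inl _, .inr _, _, _, ⟨e, he⟩, ⟨w, d, f0, h, hg⟩ =>
      ⟨w, e ≫ d, f0, h, by subst he hg; simp⟩
  | .inl _, .inr _, .inl _, _, _, _, hg => hg.elim
  | .inl _, .inr _, .inr _, _, _, ⟨w, d, f0, h, hf⟩, ⟨ψ, hg⟩ =>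
      ⟨w, d, f0 ≫ ψ, h, by subst hf hg; simp⟩
  | .inr _, .inl _, _, _, _, hf, _ => hf.elim
  | .inr _, .inr _, .inl _, _, _, _, hg => hg.elim
  | .inr _, .inr _, .inr _, _, _, ⟨ψ, hf⟩, ⟨ψ', hg⟩ =>
      ⟨ψ ≫ ψ', by subst hf hg; simp⟩

instance instKCat : Category (KObj F G iX iY) where
  Hom a b := {g : KOb F G iX iY a ⟶ KOb F G iX iY b // Q F G iX iY a b g}
  id a := ⟨𝟙 _, Q_id F G iX iY a⟩
  comp {a b c} f g := ⟨f.1 ≫ g.1, Q_comp F G iX iY a b c f.1 g.1 f.2 g.2⟩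
  id_comp f := Subtype.ext (Category.id_comp f.1)
  comp_id f := Subtype.ext (Category.comp_id f.1)
  assoc f g h := Subtype.ext (Category.assoc f.1 g.1 h.1)

@[simp] lemma K_id_val (a : KObj F G iX iY) : (𝟙 a : a ⟶ a).1 = 𝟙 (KOb F G iX iY a) := rfl
@[simp] lemma K_comp_val {a b c : KObj F G iX iY} (f : a ⟶ b) (g : b ⟶ c) :
    (f ≫ g).1 = f.1 ≫ g.1 := rfl

lemma K_hom_ext {a b : KObj F G iX iY} {f g : a ⟶ b} (h : f.1 = g.1) : f = g :=
  Subtype.ext h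

@[simp] lemma K_eqToHom_val {a b : KObj F G iX iY} (h : a = b) :
    (eqToHom h).1 = eqToHom (congrArg (KOb F G iX iY) h) := by
  subst h; rfl

/-- Functor `K ⥤ Z`. -/
def MK : KObj F G iX iY ⥤ ↑Z where
  obj := KOb F G iX iY
  map f := f.1
  map_id _ := rfl
  map_comp _ _ := rfl

section Main

variable (hpo : F ≫ iX = G ≫ iY)

open scoped Classical in
noncomputable def obXK (x : ↑X) : KObj F G iX iY :=
  if h : x ∈ Set.range F.toFunctor.obj then Sum.inl (G.toFunctor.obj h.choose) else Sum.inr ⟨x, h⟩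

lemma obXK_pos {x : ↑X} (h : x ∈ Set.range F.toFunctor.obj) :
    obXK F G iX iY x = Sum.inl (G.toFunctor.obj h.choose) := dif_pos h

lemma obXK_neg {x : ↑X} (h : x ∉ Set.range F.toFunctor.obj) :
    obXK F G iX iY x = Sum.inr ⟨x, h⟩ := dif_neg h

include hpo in
lemma KOb_obXK (x : ↑X) : KOb F G iX iY (obXK F G iX iY x) = iX.toFunctor.obj x := by
  by_cases h : x ∈ Set.range F.toFunctor.obj
  · rw [obXK_pos F G iX iY h]
    exact ((Functor.congr_obj (congrArg Cat.Hom.toFunctor hpo) h.choose).symm).trans (congrArg iX.toFunctor.obj h.choose_spec)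
  · rw [obXK_neg F G iX iY h]; rfl

variable (hfull : F.toFunctor.Full)
variable (hsieve : ∀ {x : ↑X} {w : ↑W} (_ : x ⟶ F.toFunctor.obj w), ∃ w' : ↑W, F.toFunctor.obj w' = x)

lemma Q_cast {a a' b b' : KObj F G iX iY} (ha : a = a') (hb : b = b')
    {g : KOb F G iX iY a ⟶ KOb F G iX iY b} (h : Q F G iX iY a b g) :
    Q F G iX iY a' b' (eqToHom (congrArg (KOb F G iX iY) ha).symm ≫ g ≫
      eqToHom (congrArg (KOb F G iX iY) hb)) := by
  subst ha; subst hb; simpa using h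

include hpo hfull hsieve in
lemma QmapX {x x' : ↑X} (ψ : x ⟶ x') :
    Q F G iX iY (obXK F G iX iY x) (obXK F G iX iY x')
      (eqToHom (KOb_obXK F G iX iY hpo x) ≫ iX.toFunctor.map ψ ≫
        eqToHom (KOb_obXK F G iX iY hpo x').symm) := by
  haveI := hfull
  by_cases hx' : x' ∈ Set.range F.toFunctor.obj
  · have hx : x ∈ Set.range F.toFunctor.obj := by
      obtain ⟨w0, hw0⟩ := hsieve (ψ ≫ eqToHom hx'.choose_spec.symm)
      exact ⟨w0, hw0⟩
    have key : eqToHom (KOb_obXK F G iX iY hpo x) ≫ iX.toFunctor.map ψ ≫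
          eqToHom (KOb_obXK F G iX iY hpo x').symm
        = eqToHom (congrArg (KOb F G iX iY) (obXK_pos F G iX iY (Z := Z) hx).symm).symm ≫
            iY.toFunctor.map (G.toFunctor.map (F.toFunctor.preimage
              (eqToHom hx.choose_spec ≫ ψ ≫ eqToHom hx'.choose_spec.symm))) ≫
            eqToHom (congrArg (KOb F G iX iY) (obXK_pos F G iX iY (Z := Z) hx').symm) := by
      have hhom := Functor.congr_hom (congrArg Cat.Hom.toFunctor hpo)
        (F.toFunctor.preimage (eqToHom hx.choose_spec ≫ ψ ≫ eqToHom hx'.choose_spec.symm))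
      rw [Cat.Hom.comp_map, Functor.map_preimage] at hhom
      have hhom' := heq_of_eq hhom
      apply eq_of_heq
      simp only [Cat.Hom.comp_map, Functor.map_comp, eqToHom_map, Category.assoc,
        eqToHom_comp_heq_iff, comp_eqToHom_heq_iff, heq_eqToHom_comp_iff,
        heq_comp_eqToHom_iff, Cat.Hom.comp_obj] at hhom' ⊢
      exact hhom'.trans (comp_eqToHom_heq _ _).symm
    rw [key]
    exact Q_cast F G iX iY (obXK_pos F G iX iY (Z := Z) hx).symm
      (obXK_pos F G iX iY (Z := Z) hx').symm ⟨_, rfl⟩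
  · by_cases hx : x ∈ Set.range F.toFunctor.obj
    · have key : eqToHom (KOb_obXK F G iX iY hpo x) ≫ iX.toFunctor.map ψ ≫
            eqToHom (KOb_obXK F G iX iY hpo x').symm
          = eqToHom (congrArg (KOb F G iX iY) (obXK_pos F G iX iY (Z := Z) hx).symm).symm ≫
              (iY.toFunctor.map (𝟙 (G.toFunctor.obj hx.choose)) ≫
                eqToHom ((Functor.congr_obj (congrArg Cat.Hom.toFunctor hpo) hx.choose).symm) ≫
                iX.toFunctor.map (eqToHom hx.choose_spec ≫ ψ)) ≫
              eqToHom (congrArg (KOb F G iX iY) (obXK_neg F G iX iY (Z := Z) hx').symm) := by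
        apply eq_of_heq
        simp [eqToHom_map]
        erw [eqToHom_trans_assoc]
      rw [key]
      exact Q_cast F G iX iY (obXK_pos F G iX iY (Z := Z) hx).symm
        (obXK_neg F G iX iY (Z := Z) hx').symm
        ⟨hx.choose, 𝟙 _, eqToHom hx.choose_spec ≫ ψ,
          (Functor.congr_obj (congrArg Cat.Hom.toFunctor hpo) hx.choose).symm, rfl⟩
    · have key : eqToHom (KOb_obXK F G iX iY hpo x) ≫ iX.toFunctor.map ψ ≫
            eqToHom (KOb_obXK F G iX iY hpo x').symm
          = eqToHom (congrArg (KOb F G iX iY) (obXK_neg F G iX iY (Z := Z) hx).symm).symm ≫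
              iX.toFunctor.map ψ ≫
              eqToHom (congrArg (KOb F G iX iY) (obXK_neg F G iX iY (Z := Z) hx').symm) := by
        apply eq_of_heq
        simp [eqToHom_map]
      rw [key]
      exact Q_cast F G iX iY (obXK_neg F G iX iY (Z := Z) hx).symm
        (obXK_neg F G iX iY (Z := Z) hx').symm ⟨ψ, rfl⟩

/-- The functor `X ⥤ K`. -/
noncomputable def iXK : ↑X ⥤ KObj F G iX iY where
  obj := obXK F G iX iY
  map {x x'} ψ := ⟨eqToHom (KOb_obXK F G iX iY hpo x) ≫ iX.toFunctor.map ψ ≫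
      eqToHom (KOb_obXK F G iX iY hpo x').symm,
    QmapX F G iX iY hpo hfull hsieve ψ⟩
  map_id x := K_hom_ext F G iX iY (by simp)
  map_comp f g := K_hom_ext F G iX iY (by simp)

/-- The functor `Y ⥤ K`. -/
def iYK : ↑Y ⥤ KObj F G iX iY where
  obj y := Sum.inl y
  map {y y'} e := ⟨iY.toFunctor.map e, ⟨e, rfl⟩⟩
  map_id y := K_hom_ext F G iX iY (by simp; rfl)
  map_comp f g := K_hom_ext F G iX iY (by simp; rfl)

@[simp] lemma iXK_map_val {x x' : ↑X} (ψ : x ⟶ x') :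
    ((iXK F G iX iY hpo hfull hsieve).map ψ).1 =
      eqToHom (KOb_obXK F G iX iY hpo x) ≫ iX.toFunctor.map ψ ≫
        eqToHom (KOb_obXK F G iX iY hpo x').symm := rfl

@[simp] lemma iYK_map_val {y y' : ↑Y} (e : y ⟶ y') :
    ((iYK F G iX iY).map e).1 = iY.toFunctor.map e := rfl

@[simp] lemma MK_obj (a : KObj F G iX iY) : (MK F G iX iY).obj a = KOb F G iX iY a := rfl
@[simp] lemma MK_map {a b : KObj F G iX iY} (f : a ⟶ b) : (MK F G iX iY).map f = f.1 := rfl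

include hpo in
lemma heq_iX_iY {w w' : ↑W} (χ : w ⟶ w') :
    HEq (iX.toFunctor.map (F.toFunctor.map χ)) (iY.toFunctor.map (G.toFunctor.map χ)) := by
  have h := heq_of_eq (Functor.congr_hom (congrArg Cat.Hom.toFunctor hpo) χ)
  simp only [Cat.Hom.comp_map, Cat.Hom.comp_obj, Category.assoc, eqToHom_comp_heq_iff,
    comp_eqToHom_heq_iff, heq_eqToHom_comp_iff, heq_comp_eqToHom_iff] at h
  exact h

lemma obXK_F (hinj : Function.Injective F.toFunctor.obj) (w : ↑W) :
    obXK F G iX iY (F.toFunctor.obj w) = Sum.inl (G.toFunctor.obj w) := by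
  have h : F.toFunctor.obj w ∈ Set.range F.toFunctor.obj := ⟨w, rfl⟩
  rw [obXK_pos F G iX iY (Z := Z) h, hinj h.choose_spec]

include hpo hfull hsieve in
lemma sqK (hinj : Function.Injective F.toFunctor.obj) :
    F.toFunctor ⋙ iXK F G iX iY hpo hfull hsieve = G.toFunctor ⋙ iYK F G iX iY := by
  refine CategoryTheory.Functor.ext (fun w => obXK_F F G iX iY hinj w) ?_
  intro w w' χ
  apply K_hom_ext
  apply eq_of_heq
  simp only [Functor.comp_map, K_comp_val, K_eqToHom_val, iXK_map_val, iYK_map_val,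
    Category.assoc, eqToHom_comp_heq_iff, comp_eqToHom_heq_iff, heq_eqToHom_comp_iff,
    heq_comp_eqToHom_iff]
  erw [K_eqToHom_val]
  exact (eqToHom_comp_heq _ _).trans ((comp_eqToHom_heq _ _).trans
    ((heq_iX_iY F G iX iY hpo χ).trans ((comp_eqToHom_heq _ _).symm.trans (eqToHom_comp_heq _ _).symm)))

include hpo hfull hsieve in
lemma iXK_comp_MK :
    iXK F G iX iY hpo hfull hsieve ⋙ MK F G iX iY = iX.toFunctor := by
  refine CategoryTheory.Functor.ext (fun x => KOb_obXK F G iX iY hpo x) ?_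
  intro x x' ψ
  rfl

lemma iYK_comp_MK : iYK F G iX iY ⋙ MK F G iX iY = iY.toFunctor := by
  refine CategoryTheory.Functor.ext (fun y => rfl) ?_
  intro y y' e
  exact eq_of_heq ((eqToHom_comp_heq _ _).trans (comp_eqToHom_heq _ _)).symm

include hpo in
lemma main_hom {a b : KObj F G iX iY} (g : KOb F G iX iY a ⟶ KOb F G iX iY b)
    (hQ : Q F G iX iY a b g) {z z' : ↑Z} (e₁ : KOb F G iX iY a = z)
    (e₂ : KOb F G iX iY b = z') (φ : z ⟶ z')
    (hφ : φ = eqToHom e₁.symm ≫ g ≫ eqToHom e₂) :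
    (∃ (x x' : ↑X) (ψ : x ⟶ x') (hx : iX.toFunctor.obj x = z) (hx' : iX.toFunctor.obj x' = z'),
        ¬ _root_.InImage F ψ ∧ φ = eqToHom hx.symm ≫ iX.toFunctor.map ψ ≫ eqToHom hx') ∨
      (∃ (y₁ y₂ : ↑Y) (d : y₁ ⟶ y₂) (α : z ⟶ iY.toFunctor.obj y₁) (β : iY.toFunctor.obj y₂ ⟶ z'),
        φ = α ≫ iY.toFunctor.map d ≫ β ∧
        ((∃ h : z = iY.toFunctor.obj y₁, α = eqToHom h) ∨
          (∃ (w₁ : ↑W) (hy₁ : y₁ = G.toFunctor.obj w₁) (x₀ : ↑X) (f₁ : x₀ ⟶ F.toFunctor.obj w₁)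
            (hz : iX.toFunctor.obj x₀ = z), ¬ _root_.InImage F f₁ ∧
            α = eqToHom hz.symm ≫ iX.toFunctor.map f₁ ≫
              eqToHom (show iX.toFunctor.obj (F.toFunctor.obj w₁) = iY.toFunctor.obj y₁ by
                rw [hy₁]; exact Functor.congr_obj (congrArg Cat.Hom.toFunctor hpo) w₁))) ∧
        ((∃ h : iY.toFunctor.obj y₂ = z', β = eqToHom h) ∨
          (∃ (w₂ : ↑W) (hy₂ : y₂ = G.toFunctor.obj w₂) (x₂ : ↑X) (f₂ : F.toFunctor.obj w₂ ⟶ x₂)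
            (hz' : iX.toFunctor.obj x₂ = z'), ¬ _root_.InImage F f₂ ∧
            β = eqToHom (show iY.toFunctor.obj y₂ = iX.toFunctor.obj (F.toFunctor.obj w₂) by
                rw [hy₂]; exact (Functor.congr_obj (congrArg Cat.Hom.toFunctor hpo) w₂).symm) ≫
              iX.toFunctor.map f₂ ≫ eqToHom hz'))) := by
  obtain y | xx := a <;> obtain y' | xx' := b
  · obtain ⟨e, he⟩ := hQ
    subst he
    exact Or.inr ⟨y, y', e, eqToHom e₁.symm, eqToHom e₂, hφ,
      Or.inl ⟨e₁.symm, rfl⟩, Or.inl ⟨e₂, rfl⟩⟩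
  · obtain ⟨w, d, f, h, hg⟩ := hQ
    subst hg
    refine Or.inr ⟨y, G.toFunctor.obj w, d, eqToHom e₁.symm, eqToHom h ≫ iX.toFunctor.map f ≫ eqToHom e₂,
      by rw [hφ]; simp, Or.inl ⟨e₁.symm, rfl⟩, Or.inr ⟨w, rfl, xx'.1, f, e₂, ?_, rfl⟩⟩
    rintro ⟨c, c', ψ₀, hc, hc', -⟩
    exact xx'.2 ⟨c', hc'⟩
  · exact hQ.elim
  · obtain ⟨ψ, hg⟩ := hQ
    subst hg
    refine Or.inl ⟨xx.1, xx'.1, ψ, e₁, e₂, ?_, hφ⟩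
    rintro ⟨c, c', ψ₀, hc, hc', -⟩
    exact xx'.2 ⟨c', hc'⟩

end Main
end Stmt11Aux

open Stmt11Aux

/-- Fiore–Paoli structure of the pushout `Z = X ⊔_W Y` in `Cat` along a sieve `W ⊆ X`
(a full embedding closed under precomposition) and an embedding `W ⟶ Y`:
the objects of `Z` are `Ob(Y) ⊔ (Ob(X) \ Ob(W))`, and every morphism of `Z` is either a
morphism of `X` not in `W`, or a path `X₀ ⟶ Y₁ ⟶ Y₂ ⟶ X₂` whose middle map comes from `Y`
and whose outer maps are identities or morphisms of `X` not in `W` whose relevant endpoint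
lies in `W`. -/
theorem stmt_11 {W X Y Z : Cat} (F : W ⟶ X) (G : W ⟶ Y) (iX : X ⟶ Z) (iY : Y ⟶ Z)
    (hpo : IsPushout F G iX iY)
    (hF_full : F.toFunctor.Full) (hF_faithful : F.toFunctor.Faithful)
    (hF_injobj : Function.Injective F.toFunctor.obj)
    (hsieve : ∀ {x : ↑X} {w : ↑W} (_ : x ⟶ F.toFunctor.obj w), ∃ w' : ↑W, F.toFunctor.obj w' = x)
    (hG_faithful : G.toFunctor.Faithful) (hG_injobj : Function.Injective G.toFunctor.obj) :
    Function.Bijective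
      (Sum.elim iY.toFunctor.obj (fun x : {x : ↑X // x ∉ Set.range F.toFunctor.obj} => iX.toFunctor.obj x.1)) ∧
    ∀ {z z' : ↑Z} (φ : z ⟶ z'),
      (∃ (x x' : ↑X) (ψ : x ⟶ x') (hx : iX.toFunctor.obj x = z) (hx' : iX.toFunctor.obj x' = z'),
        ¬ InImage F ψ ∧ φ = eqToHom hx.symm ≫ iX.toFunctor.map ψ ≫ eqToHom hx') ∨
      (∃ (y₁ y₂ : ↑Y) (d : y₁ ⟶ y₂) (α : z ⟶ iY.toFunctor.obj y₁) (β : iY.toFunctor.obj y₂ ⟶ z'),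
        φ = α ≫ iY.toFunctor.map d ≫ β ∧
        ((∃ h : z = iY.toFunctor.obj y₁, α = eqToHom h) ∨
          (∃ (w₁ : ↑W) (hy₁ : y₁ = G.toFunctor.obj w₁) (x₀ : ↑X) (f₁ : x₀ ⟶ F.toFunctor.obj w₁)
            (hz : iX.toFunctor.obj x₀ = z), ¬ InImage F f₁ ∧
            α = eqToHom hz.symm ≫ iX.toFunctor.map f₁ ≫
              eqToHom (show iX.toFunctor.obj (F.toFunctor.obj w₁) = iY.toFunctor.obj y₁ by
                rw [hy₁]; exact Functor.congr_obj (congrArg Cat.Hom.toFunctor hpo.w) w₁))) ∧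
        ((∃ h : iY.toFunctor.obj y₂ = z', β = eqToHom h) ∨
          (∃ (w₂ : ↑W) (hy₂ : y₂ = G.toFunctor.obj w₂) (x₂ : ↑X) (f₂ : F.toFunctor.obj w₂ ⟶ x₂)
            (hz' : iX.toFunctor.obj x₂ = z'), ¬ InImage F f₂ ∧
            β = eqToHom (show iY.toFunctor.obj y₂ = iX.toFunctor.obj (F.toFunctor.obj w₂) by
                rw [hy₂]; exact (Functor.congr_obj (congrArg Cat.Hom.toFunctor hpo.w) w₂).symm) ≫
              iX.toFunctor.map f₂ ≫ eqToHom hz'))) := by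
  have hw : F ≫ iX = G ≫ iY := hpo.w
  let Kc : Cat := Cat.of (KObj F G iX iY)
  let iXc : X ⟶ Kc := (iXK F G iX iY hw hF_full hsieve).toCatHom
  let iYc : Y ⟶ Kc := (iYK F G iX iY).toCatHom
  have sq : F ≫ iXc = G ≫ iYc := Cat.ext <| sqK F G iX iY hw hF_full hsieve hF_injobj
  let L : Z ⟶ Kc := hpo.desc iXc iYc sq
  have hL1 : iX ≫ L = iXc := hpo.inl_desc iXc iYc sq
  have hL2 : iY ≫ L = iYc := hpo.inr_desc iXc iYc sq
  let Mc : Kc ⟶ Z := (MK F G iX iY).toCatHom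
  have hM1 : iXc ≫ Mc = iX := Cat.ext <| iXK_comp_MK F G iX iY hw hF_full hsieve
  have hM2 : iYc ≫ Mc = iY := Cat.ext <| iYK_comp_MK F G iX iY
  have hLM : L ≫ Mc = 𝟙 Z := by
    apply hpo.hom_ext
    · rw [← Category.assoc, hL1, hM1, Category.comp_id]
    · rw [← Category.assoc, hL2, hM2, Category.comp_id]
  constructor
  · constructor
    · apply Function.LeftInverse.injective (g := L.toFunctor.obj)
      intro a
      obtain y | xx := a
      · exact Functor.congr_obj (congrArg Cat.Hom.toFunctor hL2) y
      · exact (Functor.congr_obj (congrArg Cat.Hom.toFunctor hL1) xx.1).trans (obXK_neg F G iX iY (Z := Z) xx.2)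
    · intro z
      exact ⟨L.toFunctor.obj z, Functor.congr_obj (congrArg Cat.Hom.toFunctor hLM) z⟩
  · intro z z' φ
    have e₁ : KOb F G iX iY (L.toFunctor.obj z) = z := Functor.congr_obj (congrArg Cat.Hom.toFunctor hLM) z
    have e₂ : KOb F G iX iY (L.toFunctor.obj z') = z' := Functor.congr_obj (congrArg Cat.Hom.toFunctor hLM) z'
    have hφ : φ = eqToHom e₁.symm ≫ (L.toFunctor.map φ).1 ≫ eqToHom e₂ :=
      Functor.congr_hom (congrArg Cat.Hom.toFunctor hLM.symm) φ
    exact main_hom F G iX iY hw (L.toFunctor.map φ).1 (L.toFunctor.map φ).2 e₁ e₂ φ hφ
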